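/- Let A = Aᵀ with W = tr(A)I − A positive definite. Then for all R ∈ SO(3), V_A(R) = tr(A(I−R)) satisfies 0 ≤ V_A(R) ≤ 2 λ_max(W), where λ_max(W) is the largest eigenvalue of W. -/

import Mathlib

open Matrix Real

noncomputable section

/-- The skew-symmetric cross-product matrix `[u]ₓ`. -/
def skew (u : Fin 3 → ℝ) : Matrix (Fin 3) (Fin 3) ℝ :=
  !![0, -u 2, u 1; u 2, 0, -u 0; -u 1, u 0, 0]

/-- Inverse of `skew` on skew-symmetric matrices. -/
def vex (M : Matrix (Fin 3) (Fin 3) ℝ) : Fin 3 → ℝ :=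
  ![M 2 1, M 0 2, M 1 0]

/-- `ψ(A) = vex((A - Aᵀ)/2)`. -/
def psiMap (M : Matrix (Fin 3) (Fin 3) ℝ) : Fin 3 → ℝ :=
  vex ((1 / 2 : ℝ) • (M - Mᵀ))

/-- Cross product on `ℝ³`. -/
def cross3 (x y : Fin 3 → ℝ) : Fin 3 → ℝ :=
  ![x 1 * y 2 - x 2 * y 1, x 2 * y 0 - x 0 * y 2, x 0 * y 1 - x 1 * y 0]

/-- Rodrigues rotation. -/
def Ra (θ : ℝ) (u : Fin 3 → ℝ) : Matrix (Fin 3) (Fin 3) ℝ :=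
  1 + Real.sin θ • skew u + (1 - Real.cos θ) • (skew u * skew u)

/-- Membership in SO(3). -/
def SO3 (R : Matrix (Fin 3) (Fin 3) ℝ) : Prop :=
  R * Rᵀ = 1 ∧ R.det = 1

/-- Universal Cayley–Hamilton-style identity for 3×3 matrices. -/
lemma adj3 (M : Matrix (Fin 3) (Fin 3) ℝ) :
    M.adjugate = M*M - M.trace • M + (M.adjugate.trace) • 1 := by
  ext i j
  fin_cases i <;> fin_cases j <;>
    simp [Matrix.adjugate_fin_three, Matrix.trace_fin_three, Matrix.mul_apply,
      Fin.sum_univ_three, Matrix.one_apply] <;> ring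

lemma trace_conj_nonneg (X C : Matrix (Fin 3) (Fin 3) ℝ)
    (hX : ∀ x : Fin 3 → ℝ, 0 ≤ x ⬝ᵥ (X *ᵥ x)) :
    0 ≤ (Cᵀ * X * C).trace := by
  rw [Matrix.trace]
  apply Finset.sum_nonneg
  intro j _
  have := hX (fun i => C i j)
  simp [Matrix.diag, Matrix.mul_apply, dotProduct, Matrix.mulVec,
    Finset.mul_sum, Finset.sum_mul, mul_assoc, mul_comm, mul_left_comm] at this ⊢
  refine le_trans this (le_of_eq ?_)
  rw [Finset.sum_comm]
  exact Finset.sum_congr rfl fun a _ => Finset.sum_congr rfl fun b _ => by ring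

/-- `0 ≤ V_A(R) ≤ 2 λ_max(W)` on `SO(3)`. -/
theorem stmt_9 (A : Matrix (Fin 3) (Fin 3) ℝ) (hA : Aᵀ = A)
    (W : Matrix (Fin 3) (Fin 3) ℝ) (hW : W = A.trace • (1 : Matrix (Fin 3) (Fin 3) ℝ) - A)
    (hposdef : ∀ x : Fin 3 → ℝ, x ≠ 0 → 0 < x ⬝ᵥ (W *ᵥ x))
    (lmax : ℝ)
    (hmax : ∀ x : Fin 3 → ℝ, x ⬝ᵥ (W *ᵥ x) ≤ lmax * (x ⬝ᵥ x))
    (hev_max : ∃ x : Fin 3 → ℝ, x ≠ 0 ∧ W *ᵥ x = lmax • x)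
    (R : Matrix (Fin 3) (Fin 3) ℝ) (hR : SO3 R) :
    0 ≤ (A * (1 - R)).trace ∧ (A * (1 - R)).trace ≤ 2 * lmax := by
  obtain ⟨hRRT, hdet⟩ := hR
  have hRTR : Rᵀ * R = 1 := mul_eq_one_comm.mp hRRT
  have hlmax : 0 < lmax := by
    obtain ⟨x, hx, hWx⟩ := hev_max
    have h1 : 0 < x ⬝ᵥ (W *ᵥ x) := hposdef x hx
    rw [hWx, dotProduct_smul] at h1
    have h2 : 0 ≤ x ⬝ᵥ x := Finset.sum_nonneg fun i _ => mul_self_nonneg _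
    simp only [smul_eq_mul] at h1
    nlinarith
  have hWpsd : ∀ x : Fin 3 → ℝ, 0 ≤ x ⬝ᵥ (W *ᵥ x) := by
    intro x
    rcases eq_or_ne x 0 with h | h
    · simp [h]
    · exact (hposdef x h).le
  have hXpsd : ∀ x : Fin 3 → ℝ, 0 ≤ x ⬝ᵥ ((lmax • (1 : Matrix (Fin 3) (Fin 3) ℝ) - W) *ᵥ x) := by
    intro x
    have := hmax x
    rw [sub_mulVec, smul_mulVec, one_mulVec, dotProduct_sub, dotProduct_smul]
    simp only [smul_eq_mul]
    linarith
  set t : ℝ := R.trace with ht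
  have hadj : R.adjugate = Rᵀ := by
    have h1 : R * R.adjugate = 1 := by rw [Matrix.mul_adjugate, hdet, one_smul]
    calc R.adjugate = (Rᵀ * R) * R.adjugate := by rw [hRTR, one_mul]
      _ = Rᵀ * (R * R.adjugate) := by rw [Matrix.mul_assoc]
      _ = Rᵀ := by rw [h1, mul_one]
  have hstar : R * R = Rᵀ + t • R - t • 1 := by
    have h := adj3 R
    rw [hadj, Matrix.trace_transpose, ← ht] at h
    calc R * R = (R * R - t • R + t • 1) + t • R - t • 1 := by module
      _ = Rᵀ + t • R - t • 1 := by rw [← h]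
  have hstarT : Rᵀ * Rᵀ = R + t • Rᵀ - t • 1 := by
    have h := congrArg Matrix.transpose hstar
    simp only [Matrix.transpose_mul, Matrix.transpose_add, Matrix.transpose_sub,
      Matrix.transpose_smul, Matrix.transpose_one, Matrix.transpose_transpose] at h
    -- h : Rᵀ * Rᵀ = R + t • Rᵀ - t • 1 (up to arrangement)
    calc Rᵀ * Rᵀ = Rᵀ * Rᵀ := rfl
      _ = R + t • Rᵀ - t • 1 := by rw [h]
  set M : Matrix (Fin 3) (Fin 3) ℝ := (2:ℝ) • 1 - R - Rᵀ with hMdef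
  set μ : ℝ := 3 - t with hμdef
  have hMsym : Mᵀ = M := by
    rw [hMdef]
    simp only [Matrix.transpose_sub, Matrix.transpose_smul, Matrix.transpose_one,
      Matrix.transpose_transpose]
    module
  have hMS : M = (1 - R) * (1 - R)ᵀ := by
    rw [hMdef, Matrix.transpose_sub, Matrix.transpose_one]
    simp only [Matrix.sub_mul, Matrix.mul_sub, Matrix.one_mul, Matrix.mul_one, hRRT]
    module
  have htrM : M.trace = 2 * μ := by
    rw [hMdef, hμdef]
    simp [Matrix.trace_sub, Matrix.trace_smul, Matrix.trace_one, Matrix.trace_transpose,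
      smul_eq_mul, Fintype.card_fin, ← ht]
    ring
  have hM2 : M * M = μ • M := by
    rw [hMdef, hμdef]
    simp only [Matrix.sub_mul, Matrix.mul_sub, smul_mul_assoc, mul_smul_comm,
      Matrix.one_mul, Matrix.mul_one, hRRT, hRTR, hstar, hstarT, smul_smul]
    module
  have hμ0 : 0 ≤ μ := by
    have h1 : 0 ≤ M.trace := by
      rw [hMS, Matrix.trace]
      apply Finset.sum_nonneg
      intro i _
      simp only [Matrix.diag, Matrix.mul_apply, Matrix.transpose_apply]
      exact Finset.sum_nonneg fun j _ => mul_self_nonneg _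
    linarith [htrM ▸ h1]
  have hAM : (A * M).trace = 2 * (A * (1 - R)).trace := by
    have hsplit : A * M = A * (1 - R) + A * (1 - Rᵀ) := by
      rw [hMdef]
      simp only [Matrix.mul_sub, Matrix.mul_one, mul_smul_comm]
      module
    have hsym : (A * (1 - Rᵀ)).trace = (A * (1 - R)).trace := by
      rw [← Matrix.trace_transpose (A * (1 - Rᵀ)), Matrix.transpose_mul,
        Matrix.transpose_sub, Matrix.transpose_one, Matrix.transpose_transpose, hA,
        Matrix.trace_mul_comm]
    rw [hsplit, Matrix.trace_add, hsym]; ring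
  rcases eq_or_lt_of_le hμ0 with hμeq | hμpos
  · -- μ = 0 : R = 1
    have hM0 : M.trace = 0 := by rw [htrM, ← hμeq]; ring
    have hR1 : R = 1 := by
      rw [hMS, Matrix.trace] at hM0
      have hz := (Finset.sum_eq_zero_iff_of_nonneg (fun i _ => by
        simp only [Matrix.diag, Matrix.mul_apply, Matrix.transpose_apply]
        exact Finset.sum_nonneg fun j _ => mul_self_nonneg _)).mp hM0
      have hS : (1 : Matrix (Fin 3) (Fin 3) ℝ) - R = 0 := by
        ext i j
        have h1 := hz i (Finset.mem_univ i)
        simp only [Matrix.diag, Matrix.mul_apply, Matrix.transpose_apply] at h1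
        have h2 := (Finset.sum_eq_zero_iff_of_nonneg
          (fun j _ => mul_self_nonneg ((1 - R) i j))).mp h1 j (Finset.mem_univ j)
        have := mul_self_eq_zero.mp h2
        simpa using this
      exact (sub_eq_zero.mp hS).symm
    rw [hR1]
    simp
    linarith
  · -- μ > 0
    have hμne : μ ≠ 0 := hμpos.ne'
    set Q : Matrix (Fin 3) (Fin 3) ℝ := 1 - μ⁻¹ • M with hQdef
    have hQT : Qᵀ = Q := by
      rw [hQdef, Matrix.transpose_sub, Matrix.transpose_one, Matrix.transpose_smul, hMsym]
    have hQQ : Q * Q = Q := by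
      rw [hQdef]
      simp only [Matrix.sub_mul, Matrix.mul_sub, Matrix.one_mul, Matrix.mul_one,
        smul_mul_assoc, mul_smul_comm, smul_smul, hM2]
      match_scalars <;> field_simp <;> ring
    have htrQ : Q.trace = 1 := by
      rw [hQdef, Matrix.trace_sub, Matrix.trace_smul, htrM, Matrix.trace_one]
      simp only [smul_eq_mul, Fintype.card_fin, Nat.cast_ofNat]
      field_simp
      ring
    have hconj : ∀ X : Matrix (Fin 3) (Fin 3) ℝ, (X * Q).trace = (Qᵀ * X * Q).trace := by
      intro X
      rw [hQT]
      calc (X * Q).trace = (X * (Q * Q)).trace := by rw [hQQ]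
        _ = ((X * Q) * Q).trace := by rw [Matrix.mul_assoc]
        _ = (Q * (X * Q)).trace := by rw [Matrix.trace_mul_comm]
        _ = (Q * X * Q).trace := by rw [Matrix.mul_assoc]
    have hWQ0 : 0 ≤ (W * Q).trace := by
      rw [hconj W]; exact trace_conj_nonneg W Q hWpsd
    have hWQle : (W * Q).trace ≤ lmax := by
      have h1 : 0 ≤ ((lmax • (1 : Matrix (Fin 3) (Fin 3) ℝ) - W) * Q).trace := by
        rw [hconj]; exact trace_conj_nonneg _ Q hXpsd
      rw [Matrix.sub_mul, Matrix.trace_sub, smul_mul_assoc, Matrix.one_mul,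
        Matrix.trace_smul, htrQ] at h1
      simp only [smul_eq_mul, mul_one] at h1
      linarith
    have hsmulM : μ • (μ⁻¹ • M) = M := by rw [smul_smul, mul_inv_cancel₀ hμne, one_smul]
    have hMQ : M = μ • 1 - μ • Q := by
      rw [hQdef, smul_sub, hsmulM]
      module
    have hA' : A = A.trace • 1 - W := by rw [hW]; module
    have htrW : W.trace = 2 * A.trace := by
      rw [hW, Matrix.trace_sub, Matrix.trace_smul, Matrix.trace_one]
      simp only [smul_eq_mul, Fintype.card_fin, Nat.cast_ofNat]
      ring
    have hAMW : (A * M).trace = μ * (W * Q).trace := by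
      calc (A * M).trace = ((A.trace • 1 - W) * M).trace := by rw [← hA']
        _ = A.trace * M.trace - (W * M).trace := by
            rw [Matrix.sub_mul, Matrix.trace_sub, smul_mul_assoc, Matrix.one_mul,
              Matrix.trace_smul]
            simp only [smul_eq_mul]
        _ = A.trace * (2 * μ) - (W * (μ • 1 - μ • Q)).trace := by rw [htrM, ← hMQ]
        _ = A.trace * (2 * μ) - (μ * W.trace - μ * (W * Q).trace) := by
            rw [Matrix.mul_sub, Matrix.trace_sub, mul_smul_comm, Matrix.mul_one,
              mul_smul_comm, Matrix.trace_smul, Matrix.trace_smul]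
            simp only [smul_eq_mul]
        _ = μ * (W * Q).trace := by rw [htrW]; ring
    have hμ4 : μ ≤ 4 := by
      by_contra hcon
      push_neg at hcon
      have hMne : ∃ x : Fin 3 → ℝ, M *ᵥ x ≠ 0 := by
        by_contra h
        push_neg at h
        have hM0 : M = 0 := by
          ext i j
          have := congrFun (h (Pi.single j 1)) i
          simpa [Matrix.mulVec_single] using this
        rw [hM0] at htrM
        simp at htrM
        linarith
      obtain ⟨x, hx⟩ := hMne
      set v : Fin 3 → ℝ := M *ᵥ x with hv
      have hMv : M *ᵥ v = μ • v := by
        rw [hv, Matrix.mulVec_mulVec, hM2, Matrix.smul_mulVec]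
      have hq : v ⬝ᵥ (M *ᵥ v) = μ * (v ⬝ᵥ v) := by
        rw [hMv, dotProduct_smul]; simp
      have hRv : (R *ᵥ v) ⬝ᵥ (R *ᵥ v) = v ⬝ᵥ v := by
        rw [dotProduct_mulVec, ← Matrix.mulVec_transpose, Matrix.mulVec_mulVec, hRTR, one_mulVec]
      have hsymdot : v ⬝ᵥ (Rᵀ *ᵥ v) = v ⬝ᵥ (R *ᵥ v) := by
        rw [dotProduct_mulVec, Matrix.vecMul_transpose, dotProduct_comm]
      have hexp : v ⬝ᵥ (M *ᵥ v) = 2 * (v ⬝ᵥ v) - 2 * (v ⬝ᵥ (R *ᵥ v)) := by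
        rw [hMdef]
        rw [sub_mulVec, sub_mulVec, Matrix.smul_mulVec, one_mulVec,
          dotProduct_sub, dotProduct_sub, dotProduct_smul, hsymdot]
        simp only [smul_eq_mul]
        ring
      have hCS : (v ⬝ᵥ (R *ᵥ v))^2 ≤ (v ⬝ᵥ v)^2 := by
        have h := Finset.sum_mul_sq_le_sq_mul_sq Finset.univ v (R *ᵥ v)
        have e1 : v ⬝ᵥ (R *ᵥ v) = ∑ i, v i * (R *ᵥ v) i := rfl
        have e2 : (v ⬝ᵥ v) = ∑ i, v i ^ 2 := by simp [dotProduct, sq]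
        have e3 : ((R *ᵥ v) ⬝ᵥ (R *ᵥ v)) = ∑ i, (R *ᵥ v) i ^ 2 := by
          simp [dotProduct, sq]
        rw [e1]
        calc (∑ i, v i * (R *ᵥ v) i)^2 ≤ (∑ i, v i ^ 2) * ∑ i, (R *ᵥ v) i ^ 2 := h
          _ = (v ⬝ᵥ v) * ((R *ᵥ v) ⬝ᵥ (R *ᵥ v)) := by rw [e2, e3]
          _ = (v ⬝ᵥ v)^2 := by rw [hRv]; ring
      have hvv : 0 < v ⬝ᵥ v := by
        rcases (Finset.sum_nonneg fun i (_ : i ∈ Finset.univ) =>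
          mul_self_nonneg (v i)).lt_or_eq with h | h
        · exact h
        · exact absurd (dotProduct_self_eq_zero.mp h.symm) hx
      have hw : v ⬝ᵥ (R *ᵥ v) < -(v ⬝ᵥ v) := by nlinarith
      nlinarith [hCS, hvv, hw]
    constructor
    · linarith [mul_nonneg hμpos.le hWQ0, hAM, hAMW]
    · have b1 : μ * (W * Q).trace ≤ 4 * (W * Q).trace :=
        mul_le_mul_of_nonneg_right hμ4 hWQ0
      have b2 : 4 * (W * Q).trace ≤ 4 * lmax := by linarith
      linarith [hAM, hAMW]
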